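/- Let D be a canonical DBM over n clocks with D 0 k ≤ 0 for every k, and let M : Fin (n+1) → ℝ. Then Extra_M(D) i j ≤ Extra_M⁺(D) i j for all i, j, and consequently ⟦Extra_M(D)⟧ ⊆ ⟦Extra_M⁺(D)⟧. -/

import Mathlib

/-- A DBM over `n` clocks: index `0` is the reference clock. -/
abbrev DBM (n : ℕ) := Fin (n + 1) → Fin (n + 1) → WithTop ℝ

/-- The zone of a DBM. -/
def Zone {n : ℕ} (D : DBM n) : Set (Fin (n + 1) → ℝ) :=
  {v | v 0 = 0 ∧ ∀ i j, ((v i - v j : ℝ) : WithTop ℝ) ≤ D i j}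

/-- A DBM is canonical if it satisfies the triangle inequality. -/
def Canonical {n : ℕ} (D : DBM n) : Prop :=
  ∀ i j k, D i j ≤ D i k + D k j

/-- The `M`-extrapolation of a DBM. -/
noncomputable def ExtraM {n : ℕ} (M : Fin (n + 1) → ℝ) (D : DBM n) : DBM n := fun i j =>
  if ((M i : ℝ) : WithTop ℝ) < D i j then ⊤
  else if D i j < ((-(M j) : ℝ) : WithTop ℝ) then ((-(M j) : ℝ) : WithTop ℝ)
  else D i j

/-- The improved extrapolation `Extra_M⁺` (cases tested in order). -/
noncomputable def ExtraMPlus {n : ℕ} (M : Fin (n + 1) → ℝ) (D : DBM n) : DBM n := fun i j =>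
  if ((M i : ℝ) : WithTop ℝ) < D i j then ⊤
  else if D 0 i < ((-(M i) : ℝ) : WithTop ℝ) then ⊤
  else if i ≠ 0 ∧ D 0 j < ((-(M j) : ℝ) : WithTop ℝ) then ⊤
  else if i = 0 ∧ D 0 j < ((-(M j) : ℝ) : WithTop ℝ) then ((-(M j) : ℝ) : WithTop ℝ)
  else D i j

/-- for a canonical DBM with `D 0 k ≤ 0` for all `k`, the improved
extrapolation is coarser: `Extra_M(D) ≤ Extra_M⁺(D)` entrywise, and
`⟦Extra_M(D)⟧ ⊆ ⟦Extra_M⁺(D)⟧`. -/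
theorem extraM_le_extraMPlus {n : ℕ} (D : DBM n) (hD : Canonical D)
    (h0 : ∀ k, D 0 k ≤ 0) (M : Fin (n + 1) → ℝ) :
    (∀ i j, ExtraM M D i j ≤ ExtraMPlus M D i j) ∧
      Zone (ExtraM M D) ⊆ Zone (ExtraMPlus M D) := by
  have hle : ∀ i j, ExtraM M D i j ≤ ExtraMPlus M D i j := by
    intro i j
    unfold ExtraM ExtraMPlus
    by_cases h1 : ((M i : ℝ) : WithTop ℝ) < D i j
    · simp [h1]
    · rw [if_neg h1, if_neg h1]
      by_cases h2 : D 0 i < ((-(M i) : ℝ) : WithTop ℝ)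
      · rw [if_pos h2]; exact le_top
      · rw [if_neg h2]
        by_cases hj : D 0 j < ((-(M j) : ℝ) : WithTop ℝ)
        · by_cases hi : i = 0
          · subst hi; simp [hj]; exact le_rfl
          · rw [if_pos (show i ≠ 0 ∧ D 0 j < ((-(M j) : ℝ) : WithTop ℝ) from ⟨hi, hj⟩)]
            exact le_top
        · have hnd : ¬ D i j < ((-(M j) : ℝ) : WithTop ℝ) := by
            intro hc
            apply hj
            calc D 0 j ≤ D 0 i + D i j := hD 0 j i
              _ ≤ 0 + D i j := add_le_add_left (h0 i) _
              _ = D i j := zero_add _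
              _ < _ := hc
          rw [if_neg hnd, if_neg (fun h => hj h.2), if_neg (fun h => hj h.2)]
  refine ⟨hle, ?_⟩
  rintro v ⟨hv0, hv⟩
  exact ⟨hv0, fun i j => le_trans (hv i j) (hle i j)⟩
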